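/- Let S be an origin-symmetric convex body in ℝ² and U(S) the result of Steiner symmetrization of S with respect to the x-axis. Then for the measure μ₂ with density |y|^{n-1} dx dy (n ≥ 1), μ₂(S) ≥ μ₂(U(S)). -/

import Mathlib

open MeasureTheory

lemma core19 (n : ℕ) (A : Set ℝ) (hA : MeasurableSet A) (hfin : volume A ≠ ⊤) :
    ∫⁻ y in {y : ℝ | |y| ≤ (volume A).toReal / 2}, ENNReal.ofReal (|y| ^ (n - 1))
      ≤ ∫⁻ y in A, ENNReal.ofReal (|y| ^ (n - 1)) := by
  set c : ℝ := (volume A).toReal / 2 with hc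
  have hc0 : 0 ≤ c := by positivity
  have hI : {y : ℝ | |y| ≤ c} = Set.Icc (-c) c := by ext y; simp [abs_le]
  set g : ℝ → ENNReal := fun y => ENNReal.ofReal (|y| ^ (n - 1)) with hgdef
  have hg : Measurable g := by
    exact ((measurable_norm.pow_const _)).ennreal_ofReal
  have hIm : MeasurableSet (Set.Icc (-c) c) := measurableSet_Icc
  have hIvol : volume (Set.Icc (-c) c) = volume A := by
    rw [Real.volume_Icc]
    have : c - -c = (volume A).toReal := by rw [hc]; ring
    rw [this, ENNReal.ofReal_toReal hfin]
  have hvol : volume (Set.Icc (-c) c \ A) = volume (A \ Set.Icc (-c) c) := by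
    have h1 := measure_inter_add_diff (μ := volume) (Set.Icc (-c) c) hA
    have h2 := measure_inter_add_diff (μ := volume) A hIm
    rw [Set.inter_comm] at h2
    have hfin' : volume (Set.Icc (-c) c ∩ A) ≠ ⊤ :=
      fun h => hfin (top_le_iff.mp (h ▸ measure_mono Set.inter_subset_right))
    have : volume (Set.Icc (-c) c ∩ A) + volume (Set.Icc (-c) c \ A)
        = volume (Set.Icc (-c) c ∩ A) + volume (A \ Set.Icc (-c) c) := by
      rw [h1, h2, hIvol]
    exact (ENNReal.add_right_inj hfin').mp this
  have bound1 : ∫⁻ y in Set.Icc (-c) c \ A, g y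
      ≤ ENNReal.ofReal (c ^ (n - 1)) * volume (Set.Icc (-c) c \ A) := by
    rw [← setLIntegral_const]
    refine setLIntegral_mono (by measurability) fun y hy => ?_
    refine ENNReal.ofReal_le_ofReal ?_
    refine pow_le_pow_left₀ (abs_nonneg y) ?_ _
    have := hy.1
    rw [Set.mem_Icc] at this
    exact abs_le.mpr this
  have bound2 : ENNReal.ofReal (c ^ (n - 1)) * volume (A \ Set.Icc (-c) c)
      ≤ ∫⁻ y in A \ Set.Icc (-c) c, g y := by
    rw [← setLIntegral_const]
    refine setLIntegral_mono hg fun y hy => ?_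
    refine ENNReal.ofReal_le_ofReal ?_
    refine pow_le_pow_left₀ hc0 ?_ _
    have : ¬ |y| ≤ c := by
      intro h; exact hy.2 (Set.mem_Icc.mpr (abs_le.mp h))
    linarith [this, le_of_not_ge this]
  calc ∫⁻ y in {y : ℝ | |y| ≤ c}, g y
      = (∫⁻ y in Set.Icc (-c) c ∩ A, g y) + ∫⁻ y in Set.Icc (-c) c \ A, g y := by
        rw [hI]; exact (lintegral_inter_add_diff (μ := volume) g (Set.Icc (-c) c) hA).symm
    _ ≤ (∫⁻ y in A ∩ Set.Icc (-c) c, g y) + ∫⁻ y in A \ Set.Icc (-c) c, g y := by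
        rw [Set.inter_comm]
        refine add_le_add le_rfl ?_
        calc ∫⁻ y in Set.Icc (-c) c \ A, g y
            ≤ ENNReal.ofReal (c ^ (n - 1)) * volume (Set.Icc (-c) c \ A) := bound1
          _ = ENNReal.ofReal (c ^ (n - 1)) * volume (A \ Set.Icc (-c) c) := by rw [hvol]
          _ ≤ _ := bound2
    _ = ∫⁻ y in A, g y := lintegral_inter_add_diff (μ := volume) g A hIm

/-- Steiner symmetrization with respect to the `x`-axis: each vertical slice of `S` is
replaced by the symmetric closed interval of the same length. -/
noncomputable def steiner (S : Set (ℝ × ℝ)) : Set (ℝ × ℝ) :=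
  {p | (∃ y : ℝ, (p.1, y) ∈ S) ∧
    |p.2| ≤ (volume {y : ℝ | (p.1, y) ∈ S}).toReal / 2}

/-- For the measure `μ₂` with density `|y|^{n-1}`, Steiner symmetrization with respect to
the `x`-axis does not increase the measure of an origin-symmetric convex body. -/
theorem stmt_19 (n : ℕ) (hn : 1 ≤ n) (S : Set (ℝ × ℝ))
    (hSconv : Convex ℝ S) (hScomp : IsCompact S) (hSint : (interior S).Nonempty)
    (hSsymm : ∀ p ∈ S, -p ∈ S) :
    (volume.withDensity fun p : ℝ × ℝ => ENNReal.ofReal (|p.2| ^ (n - 1))) (steiner S) ≤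
      (volume.withDensity fun p : ℝ × ℝ => ENNReal.ofReal (|p.2| ^ (n - 1))) S := by
  set f : ℝ × ℝ → ENNReal := fun p => ENNReal.ofReal (|p.2| ^ (n - 1)) with hf
  have hfm : Measurable f := (measurable_snd.norm.pow_const _).ennreal_ofReal
  have hS : MeasurableSet S := hScomp.isClosed.measurableSet
  -- slices
  have hslice : ∀ x : ℝ, MeasurableSet {y : ℝ | (x, y) ∈ S} := fun x =>
    (hScomp.isClosed.preimage (Continuous.prodMk_right x)).measurableSet
  -- slice volumes finite
  obtain ⟨R, hR⟩ := hScomp.isBounded.subset_closedBall 0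
  have hslfin : ∀ x : ℝ, volume {y : ℝ | (x, y) ∈ S} ≠ ⊤ := by
    intro x
    have hsub : {y : ℝ | (x, y) ∈ S} ⊆ Set.Icc (-R) R := by
      intro y hy
      have := hR hy
      simp only [Metric.mem_closedBall, dist_zero_right, Prod.norm_def] at this
      have : ‖y‖ ≤ R := le_trans (le_max_right _ _) this
      rw [Real.norm_eq_abs] at this
      exact Set.mem_Icc.mpr (abs_le.mp this)
    intro h
    have hmono := measure_mono (μ := volume) hsub
    rw [h, Real.volume_Icc, top_le_iff] at hmono
    exact ENNReal.ofReal_ne_top hmono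
  -- measurability of steiner S
  have hw : Measurable fun x : ℝ => volume {y : ℝ | (x, y) ∈ S} := by
    have := measurable_measure_prodMk_left (ν := volume) hS
    exact this
  have hst : MeasurableSet (steiner S) := by
    have hP : MeasurableSet {p : ℝ × ℝ | ∃ y : ℝ, (p.1, y) ∈ S} := by
      have : {p : ℝ × ℝ | ∃ y : ℝ, (p.1, y) ∈ S} = Prod.fst ⁻¹' (Prod.fst '' S) := by
        ext p; simp [Set.mem_image]
      rw [this]
      exact ((hScomp.image continuous_fst).isClosed.measurableSet).preimage measurable_fst
    have hQ : MeasurableSet {p : ℝ × ℝ |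
        |p.2| ≤ (volume {y : ℝ | (p.1, y) ∈ S}).toReal / 2} := by
      exact measurableSet_le measurable_snd.norm
        (((hw.comp measurable_fst).ennreal_toReal).div_const 2)
    exact hP.inter hQ
  -- reduce to slicewise comparison via Fubini
  rw [withDensity_apply f hst, withDensity_apply f hS]
  rw [← lintegral_indicator hst f, ← lintegral_indicator hS f]
  rw [Measure.volume_eq_prod, lintegral_prod, lintegral_prod]
  · refine lintegral_mono fun x => ?_
    have hL : ∀ y : ℝ, (steiner S).indicator f (x, y)
        = ({y : ℝ | (x, y) ∈ steiner S}).indicator (fun y => ENNReal.ofReal (|y| ^ (n - 1))) y := by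
      intro y
      simp only [Set.indicator, Set.mem_setOf_eq, hf]
      rfl
    have hRi : ∀ y : ℝ, S.indicator f (x, y)
        = ({y : ℝ | (x, y) ∈ S}).indicator (fun y => ENNReal.ofReal (|y| ^ (n - 1))) y := by
      intro y
      simp only [Set.indicator, Set.mem_setOf_eq, hf]
      rfl
    simp only [hL, hRi]
    by_cases hx : ∃ y : ℝ, (x, y) ∈ S
    · have hstsl : {y : ℝ | (x, y) ∈ steiner S}
          = {y : ℝ | |y| ≤ (volume {y : ℝ | (x, y) ∈ S}).toReal / 2} := by
        ext y; simp [steiner, hx]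
      have hstm : MeasurableSet {y : ℝ | (x, y) ∈ steiner S} := by
        rw [hstsl]
        exact measurableSet_le measurable_norm measurable_const
      rw [lintegral_indicator hstm, lintegral_indicator (hslice x), hstsl]
      exact core19 n _ (hslice x) (hslfin x)
    · have : {y : ℝ | (x, y) ∈ steiner S} = ∅ := by
        ext y; simp [steiner, hx]
      simp [this]
  · exact (hfm.indicator hS).aemeasurable
  · exact (hfm.indicator hst).aemeasurable
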